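/- arXiv:2304.11535 — 3 statements merged into one kernel-verified Lean document; each statement's English description precedes it below -/
import Mathlib

section
/- Suppose n is a smooth solution of ∂_tt n_i − ∂_x(c²(n₁) ∂_x n_i) = (−|n_t|² + (2c²(n₁) − ζ_i)|n_x|²) n_i for i = 1,2,3, with c²(n₁) = α + (γ−α)n₁², ζ₁ = γ, ζ₂ = ζ₃ = α. Then with R = n_t + c n_x, S = n_t − c n_x, each component satisfies ∂_t R_i − c ∂_x R_i = (1/(4c²))((c²−ζ_i)(|R|²+|S|²) − 2(3c²−ζ_i)R·S) n_i + (c'/(2c))(R_i − S_i)R₁. -/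
open scoped BigOperators
open Function

/-- Partial derivative in the first (time) variable of a curried function. -/
noncomputable def ptd (f : ℝ → ℝ → ℝ) (t x : ℝ) : ℝ := deriv (fun τ => f τ x) t

/-- Partial derivative in the second (space) variable of a curried function. -/
noncomputable def pxd (f : ℝ → ℝ → ℝ) (t x : ℝ) : ℝ := deriv (fun y => f t y) x


lemma hasDerivAt_time {f : ℝ → ℝ → ℝ} (hf : ContDiff ℝ 2 (uncurry f)) (t x : ℝ) :
    HasDerivAt (fun τ => f τ x) (fderiv ℝ (uncurry f) (t, x) (1, 0)) t := by
  have h1 : HasFDerivAt (uncurry f) (fderiv ℝ (uncurry f) (t, x)) (t, x) :=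
    (hf.differentiable (by norm_num) (t, x)).hasFDerivAt
  have h2 : HasDerivAt (fun τ : ℝ => (τ, x)) ((1 : ℝ), (0 : ℝ)) t :=
    (hasDerivAt_id t).prodMk (hasDerivAt_const t x)
  exact h1.comp_hasDerivAt t h2

lemma hasDerivAt_space {f : ℝ → ℝ → ℝ} (hf : ContDiff ℝ 2 (uncurry f)) (t x : ℝ) :
    HasDerivAt (fun y => f t y) (fderiv ℝ (uncurry f) (t, x) (0, 1)) x := by
  have h1 : HasFDerivAt (uncurry f) (fderiv ℝ (uncurry f) (t, x)) (t, x) :=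
    (hf.differentiable (by norm_num) (t, x)).hasFDerivAt
  have h2 : HasDerivAt (fun y : ℝ => (t, y)) ((0 : ℝ), (1 : ℝ)) x :=
    (hasDerivAt_const x t).prodMk (hasDerivAt_id x)
  exact h1.comp_hasDerivAt x h2

lemma ptd_eq {f : ℝ → ℝ → ℝ} (hf : ContDiff ℝ 2 (uncurry f)) (t x : ℝ) :
    ptd f t x = fderiv ℝ (uncurry f) (t, x) (1, 0) := (hasDerivAt_time hf t x).deriv

lemma pxd_eq {f : ℝ → ℝ → ℝ} (hf : ContDiff ℝ 2 (uncurry f)) (t x : ℝ) :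
    pxd f t x = fderiv ℝ (uncurry f) (t, x) (0, 1) := (hasDerivAt_space hf t x).deriv

lemma hasDerivAt_time2 {f : ℝ → ℝ → ℝ} (hf : ContDiff ℝ 2 (uncurry f)) (t x : ℝ) (w : ℝ × ℝ) :
    HasDerivAt (fun τ => fderiv ℝ (uncurry f) (τ, x) w)
      (fderiv ℝ (fderiv ℝ (uncurry f)) (t, x) (1, 0) w) t := by
  have hG : ContDiff ℝ 1 (fderiv ℝ (uncurry f)) := hf.fderiv_right (by norm_num)
  have h1 : HasFDerivAt (fderiv ℝ (uncurry f))
      (fderiv ℝ (fderiv ℝ (uncurry f)) (t, x)) (t, x) :=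
    (hG.differentiable one_ne_zero (t, x)).hasFDerivAt
  have h2 := h1.clm_apply (hasFDerivAt_const w (t, x))
  have h3 := h2.comp_hasDerivAt t ((hasDerivAt_id t).prodMk (hasDerivAt_const t x))
  simp at h3; exact h3

lemma hasDerivAt_space2 {f : ℝ → ℝ → ℝ} (hf : ContDiff ℝ 2 (uncurry f)) (t x : ℝ) (w : ℝ × ℝ) :
    HasDerivAt (fun y => fderiv ℝ (uncurry f) (t, y) w)
      (fderiv ℝ (fderiv ℝ (uncurry f)) (t, x) (0, 1) w) x := by
  have hG : ContDiff ℝ 1 (fderiv ℝ (uncurry f)) := hf.fderiv_right (by norm_num)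
  have h1 : HasFDerivAt (fderiv ℝ (uncurry f))
      (fderiv ℝ (fderiv ℝ (uncurry f)) (t, x)) (t, x) :=
    (hG.differentiable one_ne_zero (t, x)).hasFDerivAt
  have h2 := h1.clm_apply (hasFDerivAt_const w (t, x))
  have h3 := h2.comp_hasDerivAt x ((hasDerivAt_const x t).prodMk (hasDerivAt_id x))
  simp at h3; exact h3

lemma mixed_symm {f : ℝ → ℝ → ℝ} (hf : ContDiff ℝ 2 (uncurry f)) (t x : ℝ) :
    fderiv ℝ (fderiv ℝ (uncurry f)) (t, x) (1, 0) (0, 1)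
      = fderiv ℝ (fderiv ℝ (uncurry f)) (t, x) (0, 1) (1, 0) :=
  hf.contDiffAt.isSymmSndFDerivAt (by norm_num) _ _

/-- For a smooth solution n of the variational wave system
∂_tt n_i − ∂_x(c²(n₁)∂_x n_i) = (−|n_t|² + (2c²−ζ_i)|n_x|²) n_i with
c² = α + (γ−α)n₁², ζ₁ = γ, ζ₂ = ζ₃ = α, the backward Riemann variables
R = n_t + c n_x satisfy
∂_t R_i − c ∂_x R_i
  = (1/(4c²))((c²−ζ_i)(|R|²+|S|²) − 2(3c²−ζ_i)R·S) n_i + (c'/(2c))(R_i−S_i)R₁. -/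
theorem stmt4 (α γ : ℝ) (hα : 0 < α) (hγ : 0 < γ)
    (n : Fin 3 → ℝ → ℝ → ℝ)
    (hsm : ∀ i, ContDiff ℝ 2 (Function.uncurry (n i)))
    (c : ℝ → ℝ) (hc : c = fun s => Real.sqrt (α + (γ - α) * s ^ 2))
    (hpos : ∀ t x, 0 < α + (γ - α) * (n 0 t x) ^ 2)
    (ζ : Fin 3 → ℝ) (hζ0 : ζ 0 = γ) (hζ1 : ζ 1 = α) (hζ2 : ζ 2 = α)
    (hwave : ∀ i t x,
      ptd (fun t x => ptd (n i) t x) t x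
        - pxd (fun t x => (c (n 0 t x)) ^ 2 * pxd (n i) t x) t x
      = (-(∑ j, (ptd (n j) t x) ^ 2)
          + (2 * (c (n 0 t x)) ^ 2 - ζ i) * (∑ j, (pxd (n j) t x) ^ 2)) * n i t x)
    (R S : Fin 3 → ℝ → ℝ → ℝ)
    (hR : ∀ i t x, R i t x = ptd (n i) t x + c (n 0 t x) * pxd (n i) t x)
    (hS : ∀ i t x, S i t x = ptd (n i) t x - c (n 0 t x) * pxd (n i) t x)
    (cp : ℝ → ℝ) (hcp : ∀ s, cp s = (γ - α) * s / c s) :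
    ∀ i t x,
      ptd (R i) t x - c (n 0 t x) * pxd (R i) t x
      = (1 / (4 * (c (n 0 t x)) ^ 2)) *
          (((c (n 0 t x)) ^ 2 - ζ i) * ((∑ j, (R j t x) ^ 2) + (∑ j, (S j t x) ^ 2))
            - 2 * (3 * (c (n 0 t x)) ^ 2 - ζ i) * (∑ j, R j t x * S j t x)) * n i t x
        + (cp (n 0 t x) / (2 * c (n 0 t x))) * (R i t x - S i t x) * R 0 t x := by
  intro i t x
  -- derivative of c
  have hcd : ∀ s : ℝ, 0 < α + (γ - α) * s ^ 2 →
      HasDerivAt c ((γ - α) * s / c s) s := by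
    intro s hs
    have hg : HasDerivAt (fun s : ℝ => α + (γ - α) * s ^ 2) ((γ - α) * (2 * s)) s := by
      have := ((hasDerivAt_pow 2 s).const_mul (γ - α)).const_add α
      simpa [mul_assoc] using this
    have h2 := (Real.hasDerivAt_sqrt hs.ne').comp s hg
    have hne : Real.sqrt (α + (γ - α) * s ^ 2) ≠ 0 := (Real.sqrt_pos.mpr hs).ne'
    have hval : (γ - α) * s / c s
        = 1 / (2 * Real.sqrt (α + (γ - α) * s ^ 2)) * ((γ - α) * (2 * s)) := by
      rw [hc]; field_simp
    rw [hval, hc]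
    exact h2
  have hc0 : (0:ℝ) < c (n 0 t x) := by rw [hc]; exact Real.sqrt_pos.mpr (hpos t x)
  -- derivatives of c ∘ n₀
  have hc_t : HasDerivAt (fun τ => c (n 0 τ x))
      ((γ - α) * n 0 t x / c (n 0 t x) * fderiv ℝ (uncurry (n 0)) (t, x) (1, 0)) t :=
    (hcd _ (hpos t x)).comp t (hasDerivAt_time (hsm 0) t x)
  have hc_x : HasDerivAt (fun y => c (n 0 t y))
      ((γ - α) * n 0 t x / c (n 0 t x) * fderiv ℝ (uncurry (n 0)) (t, x) (0, 1)) x :=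
    (hcd _ (hpos t x)).comp x (hasDerivAt_space (hsm 0) t x)
  -- time derivative of R i
  have hRtfun : (fun τ => R i τ x) = fun τ =>
      fderiv ℝ (uncurry (n i)) (τ, x) (1, 0)
        + c (n 0 τ x) * fderiv ℝ (uncurry (n i)) (τ, x) (0, 1) := by
    funext τ; rw [hR, ptd_eq (hsm i), pxd_eq (hsm i)]
  have eqRt : ptd (R i) t x
      = fderiv ℝ (fderiv ℝ (uncurry (n i))) (t, x) (1, 0) (1, 0)
        + ((γ - α) * n 0 t x / c (n 0 t x) * fderiv ℝ (uncurry (n 0)) (t, x) (1, 0)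
             * fderiv ℝ (uncurry (n i)) (t, x) (0, 1)
           + c (n 0 t x) * fderiv ℝ (fderiv ℝ (uncurry (n i))) (t, x) (1, 0) (0, 1)) := by
    have h := (hasDerivAt_time2 (hsm i) t x (1, 0)).add
      (hc_t.mul (hasDerivAt_time2 (hsm i) t x (0, 1)))
    unfold ptd; rw [hRtfun]
    exact h.deriv
  -- space derivative of R i
  have hRxfun : (fun y => R i t y) = fun y =>
      fderiv ℝ (uncurry (n i)) (t, y) (1, 0)
        + c (n 0 t y) * fderiv ℝ (uncurry (n i)) (t, y) (0, 1) := by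
    funext y; rw [hR, ptd_eq (hsm i), pxd_eq (hsm i)]
  have eqRx : pxd (R i) t x
      = fderiv ℝ (fderiv ℝ (uncurry (n i))) (t, x) (0, 1) (1, 0)
        + ((γ - α) * n 0 t x / c (n 0 t x) * fderiv ℝ (uncurry (n 0)) (t, x) (0, 1)
             * fderiv ℝ (uncurry (n i)) (t, x) (0, 1)
           + c (n 0 t x) * fderiv ℝ (fderiv ℝ (uncurry (n i))) (t, x) (0, 1) (0, 1)) := by
    have h := (hasDerivAt_space2 (hsm i) t x (1, 0)).add
      (hc_x.mul (hasDerivAt_space2 (hsm i) t x (0, 1)))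
    unfold pxd; rw [hRxfun]
    exact h.deriv
  -- the wave equation in fderiv form
  have hA : ptd (fun t x => ptd (n i) t x) t x
      = fderiv ℝ (fderiv ℝ (uncurry (n i))) (t, x) (1, 0) (1, 0) := by
    have hfun : (fun τ => ptd (n i) τ x)
        = fun τ => fderiv ℝ (uncurry (n i)) (τ, x) (1, 0) := by
      funext τ; exact ptd_eq (hsm i) τ x
    show deriv (fun τ => ptd (n i) τ x) t = _
    rw [hfun]
    exact (hasDerivAt_time2 (hsm i) t x (1, 0)).deriv
  have hB : pxd (fun t x => (c (n 0 t x)) ^ 2 * pxd (n i) t x) t x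
      = 2 * c (n 0 t x)
            * ((γ - α) * n 0 t x / c (n 0 t x) * fderiv ℝ (uncurry (n 0)) (t, x) (0, 1))
            * fderiv ℝ (uncurry (n i)) (t, x) (0, 1)
        + (c (n 0 t x)) ^ 2 * fderiv ℝ (fderiv ℝ (uncurry (n i))) (t, x) (0, 1) (0, 1) := by
    have hfun : (fun y => (c (n 0 t y)) ^ 2 * pxd (n i) t y)
        = fun y => (c (n 0 t y)) ^ 2 * fderiv ℝ (uncurry (n i)) (t, y) (0, 1) := by
      funext y; rw [pxd_eq (hsm i)]
    have h := ((hc_x.pow 2).mul (hasDerivAt_space2 (hsm i) t x (0, 1))).deriv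
    show deriv (fun y => (c (n 0 t y)) ^ 2 * pxd (n i) t y) x = _
    rw [hfun]; refine h.trans ?_; simp only [Pi.pow_apply]
    norm_num
  have hW := hwave i t x
  rw [hA, hB] at hW
  simp only [Fin.sum_univ_three, ptd_eq (hsm 0), ptd_eq (hsm 1), ptd_eq (hsm 2),
    pxd_eq (hsm 0), pxd_eq (hsm 1), pxd_eq (hsm 2)] at hW
  -- rewrite the goal
  rw [eqRt, eqRx, hcp]
  simp only [Fin.sum_univ_three, hR, hS, ptd_eq (hsm 0), ptd_eq (hsm 1), ptd_eq (hsm 2),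
    pxd_eq (hsm 0), pxd_eq (hsm 1), pxd_eq (hsm 2), ptd_eq (hsm i), pxd_eq (hsm i)]
  rw [mixed_symm (hsm i) t x]
  rw [eq_add_of_sub_eq hW]
  field_simp
  ring
end

section
/- Let n be a smooth solution of the liquid-crystal variational wave system and R = n_t + c n_x, S = n_t − c n_x. Then the total energy density satisfies the conservation law ∂_t(|R|² + |S|²) − ∂_x(c(n₁)(|R|² − |S|²)) = 0 pointwise. -/
open scoped BigOperators

/-- t-partial of a function on the plane, as a function on the plane. -/
noncomputable def Gd (F : ℝ × ℝ → ℝ) : ℝ × ℝ → ℝ := fun p => fderiv ℝ F p (1, 0)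

/-- x-partial of a function on the plane, as a function on the plane. -/
noncomputable def Hd (F : ℝ × ℝ → ℝ) : ℝ × ℝ → ℝ := fun p => fderiv ℝ F p (0, 1)

private lemma congr_d {f : ℝ → ℝ} {a b t : ℝ} (h : HasDerivAt f a t) (e : a = b) :
    HasDerivAt f b t := e ▸ h

private lemma lineT {F : ℝ × ℝ → ℝ} {t x : ℝ} (hF : DifferentiableAt ℝ F (t, x)) :
    HasDerivAt (fun τ => F (τ, x)) (Gd F (t, x)) t := by
  have h : HasDerivAt (fun τ : ℝ => ((τ, x) : ℝ × ℝ)) ((1 : ℝ), (0 : ℝ)) t :=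
    (hasDerivAt_id t).prodMk (hasDerivAt_const t x)
  exact hF.hasFDerivAt.comp_hasDerivAt t h

private lemma lineX {F : ℝ × ℝ → ℝ} {t x : ℝ} (hF : DifferentiableAt ℝ F (t, x)) :
    HasDerivAt (fun y => F (t, y)) (Hd F (t, x)) x := by
  have h : HasDerivAt (fun y : ℝ => ((t, y) : ℝ × ℝ)) ((0 : ℝ), (1 : ℝ)) x :=
    (hasDerivAt_const x t).prodMk (hasDerivAt_id x)
  exact hF.hasFDerivAt.comp_hasDerivAt x h

private lemma gd_contDiff {F : ℝ × ℝ → ℝ} (hF : ContDiff ℝ 2 F) : ContDiff ℝ 1 (Gd F) :=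
  (hF.fderiv_right (by norm_num)).clm_apply contDiff_const

private lemma hd_contDiff {F : ℝ × ℝ → ℝ} (hF : ContDiff ℝ 2 F) : ContDiff ℝ 1 (Hd F) :=
  (hF.fderiv_right (by norm_num)).clm_apply contDiff_const

private lemma mixed_symm_s5 {F : ℝ × ℝ → ℝ} (hF : ContDiff ℝ 2 F) (p : ℝ × ℝ) :
    Hd (Gd F) p = Gd (Hd F) p := by
  have hd : ∀ q, HasFDerivAt F (fderiv ℝ F q) q := fun q =>
    ((hF.differentiable (by norm_num)) q).hasFDerivAt
  have h1 : ContDiff ℝ 1 (fderiv ℝ F) := hF.fderiv_right (by norm_num)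
  have h2 : HasFDerivAt (fderiv ℝ F) (fderiv ℝ (fderiv ℝ F) p) p :=
    ((h1.differentiable one_ne_zero) p).hasFDerivAt
  have e : ∀ v w : ℝ × ℝ,
      fderiv ℝ (fun q => fderiv ℝ F q v) p w = fderiv ℝ (fderiv ℝ F) p w v := by
    intro v w
    have h3 : HasFDerivAt (fun q => fderiv ℝ F q v)
        ((ContinuousLinearMap.apply ℝ ℝ v).comp (fderiv ℝ (fderiv ℝ F) p)) p :=
      (ContinuousLinearMap.apply ℝ ℝ v).hasFDerivAt.comp p h2
    rw [h3.fderiv]; rfl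
  show fderiv ℝ (fun q => fderiv ℝ F q (1, 0)) p (0, 1)
      = fderiv ℝ (fun q => fderiv ℝ F q (0, 1)) p (1, 0)
  rw [e, e]
  exact second_derivative_symmetric hd h2 (0, 1) (1, 0)

/-- Energy conservation law: for smooth solutions of the liquid-crystal
variational wave system, with R = n_t + c n_x and S = n_t − c n_x,
∂_t(|R|² + |S|²) − ∂_x(c(n₁)(|R|² − |S|²)) = 0 pointwise. -/
theorem stmt5 (α γ : ℝ) (hα : 0 < α) (hγ : 0 < γ)
    (n : Fin 3 → ℝ → ℝ → ℝ)
    (hsm : ∀ i, ContDiff ℝ 2 (Function.uncurry (n i)))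
    (hunit : ∀ t x, ∑ j, (n j t x) ^ 2 = 1)
    (c : ℝ → ℝ) (hc : c = fun s => Real.sqrt (α + (γ - α) * s ^ 2))
    (hpos : ∀ t x, 0 < α + (γ - α) * (n 0 t x) ^ 2)
    (ζ : Fin 3 → ℝ) (hζ0 : ζ 0 = γ) (hζ1 : ζ 1 = α) (hζ2 : ζ 2 = α)
    (hwave : ∀ i t x,
      ptd (fun t x => ptd (n i) t x) t x
        - pxd (fun t x => (c (n 0 t x)) ^ 2 * pxd (n i) t x) t x
      = (-(∑ j, (ptd (n j) t x) ^ 2)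
          + (2 * (c (n 0 t x)) ^ 2 - ζ i) * (∑ j, (pxd (n j) t x) ^ 2)) * n i t x)
    (R S : Fin 3 → ℝ → ℝ → ℝ)
    (hR : ∀ i t x, R i t x = ptd (n i) t x + c (n 0 t x) * pxd (n i) t x)
    (hS : ∀ i t x, S i t x = ptd (n i) t x - c (n 0 t x) * pxd (n i) t x) :
    ∀ t x,
      ptd (fun t x => (∑ j, (R j t x) ^ 2) + (∑ j, (S j t x) ^ 2)) t x
        - pxd (fun t x =>
            c (n 0 t x) * ((∑ j, (R j t x) ^ 2) - (∑ j, (S j t x) ^ 2))) t x = 0 := by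
  intro t x
  have hcsq : ∀ a b : ℝ, (c (n 0 a b)) ^ 2 = α + (γ - α) * (n 0 a b) ^ 2 := by
    intro a b; simp only [hc]; exact Real.sq_sqrt (hpos a b).le
  set g0 : ℝ × ℝ → ℝ := Gd (Function.uncurry (n 0)) with hg0def
  set g1 : ℝ × ℝ → ℝ := Gd (Function.uncurry (n 1)) with hg1def
  set g2 : ℝ × ℝ → ℝ := Gd (Function.uncurry (n 2)) with hg2def
  set h0 : ℝ × ℝ → ℝ := Hd (Function.uncurry (n 0)) with hh0def
  set h1 : ℝ × ℝ → ℝ := Hd (Function.uncurry (n 1)) with hh1def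
  set h2 : ℝ × ℝ → ℝ := Hd (Function.uncurry (n 2)) with hh2def
  have hdn : ∀ j, Differentiable ℝ (Function.uncurry (n j)) :=
    fun j => (hsm j).differentiable two_ne_zero
  -- differentiability of the first partials
  have hg0c : ContDiff ℝ 1 g0 := gd_contDiff (hsm 0)
  have hg1c : ContDiff ℝ 1 g1 := gd_contDiff (hsm 1)
  have hg2c : ContDiff ℝ 1 g2 := gd_contDiff (hsm 2)
  have hh0c : ContDiff ℝ 1 h0 := hd_contDiff (hsm 0)
  have hh1c : ContDiff ℝ 1 h1 := hd_contDiff (hsm 1)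
  have hh2c : ContDiff ℝ 1 h2 := hd_contDiff (hsm 2)
  -- partial derivatives of n as plane functions
  have hGeq0 : ptd (n 0) = fun a b => g0 (a, b) := by
    funext a b; exact (lineT ((hdn 0) (a, b))).deriv
  have hGeq1 : ptd (n 1) = fun a b => g1 (a, b) := by
    funext a b; exact (lineT ((hdn 1) (a, b))).deriv
  have hGeq2 : ptd (n 2) = fun a b => g2 (a, b) := by
    funext a b; exact (lineT ((hdn 2) (a, b))).deriv
  have hHeq0 : pxd (n 0) = fun a b => h0 (a, b) := by
    funext a b; exact (lineX ((hdn 0) (a, b))).deriv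
  have hHeq1 : pxd (n 1) = fun a b => h1 (a, b) := by
    funext a b; exact (lineX ((hdn 1) (a, b))).deriv
  have hHeq2 : pxd (n 2) = fun a b => h2 (a, b) := by
    funext a b; exact (lineX ((hdn 2) (a, b))).deriv
  have hGeq : ∀ j, ptd (n j) = fun a b =>
      Gd (Function.uncurry (n j)) (a, b) := by
    intro j; fin_cases j <;> [exact hGeq0; exact hGeq1; exact hGeq2]
  have hHeq : ∀ j, pxd (n j) = fun a b =>
      Hd (Function.uncurry (n j)) (a, b) := by
    intro j; fin_cases j <;> [exact hHeq0; exact hHeq1; exact hHeq2]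
  -- HasDerivAt atoms at (t, x)
  have hnT0 : HasDerivAt (fun τ => n 0 τ x) (g0 (t, x)) t := lineT ((hdn 0) (t, x))
  have hnT1 : HasDerivAt (fun τ => n 1 τ x) (g1 (t, x)) t := lineT ((hdn 1) (t, x))
  have hnT2 : HasDerivAt (fun τ => n 2 τ x) (g2 (t, x)) t := lineT ((hdn 2) (t, x))
  have hnX0 : HasDerivAt (fun y => n 0 t y) (h0 (t, x)) x := lineX ((hdn 0) (t, x))
  have hnX1 : HasDerivAt (fun y => n 1 t y) (h1 (t, x)) x := lineX ((hdn 1) (t, x))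
  have hnX2 : HasDerivAt (fun y => n 2 t y) (h2 (t, x)) x := lineX ((hdn 2) (t, x))
  have hgT0 : HasDerivAt (fun τ => g0 (τ, x)) (Gd g0 (t, x)) t :=
    lineT ((hg0c.differentiable one_ne_zero) (t, x))
  have hgT1 : HasDerivAt (fun τ => g1 (τ, x)) (Gd g1 (t, x)) t :=
    lineT ((hg1c.differentiable one_ne_zero) (t, x))
  have hgT2 : HasDerivAt (fun τ => g2 (τ, x)) (Gd g2 (t, x)) t :=
    lineT ((hg2c.differentiable one_ne_zero) (t, x))
  have hgX0 : HasDerivAt (fun y => g0 (t, y)) (Hd g0 (t, x)) x :=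
    lineX ((hg0c.differentiable one_ne_zero) (t, x))
  have hgX1 : HasDerivAt (fun y => g1 (t, y)) (Hd g1 (t, x)) x :=
    lineX ((hg1c.differentiable one_ne_zero) (t, x))
  have hgX2 : HasDerivAt (fun y => g2 (t, y)) (Hd g2 (t, x)) x :=
    lineX ((hg2c.differentiable one_ne_zero) (t, x))
  have hhT0 : HasDerivAt (fun τ => h0 (τ, x)) (Gd h0 (t, x)) t :=
    lineT ((hh0c.differentiable one_ne_zero) (t, x))
  have hhT1 : HasDerivAt (fun τ => h1 (τ, x)) (Gd h1 (t, x)) t :=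
    lineT ((hh1c.differentiable one_ne_zero) (t, x))
  have hhT2 : HasDerivAt (fun τ => h2 (τ, x)) (Gd h2 (t, x)) t :=
    lineT ((hh2c.differentiable one_ne_zero) (t, x))
  have hhX0 : HasDerivAt (fun y => h0 (t, y)) (Hd h0 (t, x)) x :=
    lineX ((hh0c.differentiable one_ne_zero) (t, x))
  have hhX1 : HasDerivAt (fun y => h1 (t, y)) (Hd h1 (t, x)) x :=
    lineX ((hh1c.differentiable one_ne_zero) (t, x))
  have hhX2 : HasDerivAt (fun y => h2 (t, y)) (Hd h2 (t, x)) x :=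
    lineX ((hh2c.differentiable one_ne_zero) (t, x))
  -- mixed partial symmetry
  have hs0 : Hd g0 (t, x) = Gd h0 (t, x) := mixed_symm_s5 (hsm 0) (t, x)
  have hs1 : Hd g1 (t, x) = Gd h1 (t, x) := mixed_symm_s5 (hsm 1) (t, x)
  have hs2 : Hd g2 (t, x) = Gd h2 (t, x) := mixed_symm_s5 (hsm 2) (t, x)
  -- derivative of the coefficient q = α + (γ-α) n₀²
  have hqT : HasDerivAt (fun τ => α + (γ - α) * n 0 τ x ^ 2)
      (2 * (γ - α) * n 0 t x * g0 (t, x)) t :=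
    congr_d (((hnT0.pow 2).const_mul (γ - α)).const_add α) (by push_cast; ring)
  have hqX : HasDerivAt (fun y => α + (γ - α) * n 0 t y ^ 2)
      (2 * (γ - α) * n 0 t x * h0 (t, x)) x :=
    congr_d (((hnX0.pow 2).const_mul (γ - α)).const_add α) (by push_cast; ring)
  -- sums of squares along lines
  have hUsqT : HasDerivAt (fun τ => g0 (τ, x) ^ 2 + g1 (τ, x) ^ 2 + g2 (τ, x) ^ 2)
      (2 * g0 (t, x) * Gd g0 (t, x) + 2 * g1 (t, x) * Gd g1 (t, x)
        + 2 * g2 (t, x) * Gd g2 (t, x)) t :=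
    congr_d (((hgT0.pow 2).add (hgT1.pow 2)).add (hgT2.pow 2)) (by push_cast; ring)
  have hVsqT : HasDerivAt (fun τ => h0 (τ, x) ^ 2 + h1 (τ, x) ^ 2 + h2 (τ, x) ^ 2)
      (2 * h0 (t, x) * Gd h0 (t, x) + 2 * h1 (t, x) * Gd h1 (t, x)
        + 2 * h2 (t, x) * Gd h2 (t, x)) t :=
    congr_d (((hhT0.pow 2).add (hhT1.pow 2)).add (hhT2.pow 2)) (by push_cast; ring)
  have hUVX : HasDerivAt (fun y => g0 (t, y) * h0 (t, y) + g1 (t, y) * h1 (t, y)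
        + g2 (t, y) * h2 (t, y))
      (Hd g0 (t, x) * h0 (t, x) + g0 (t, x) * Hd h0 (t, x)
        + (Hd g1 (t, x) * h1 (t, x) + g1 (t, x) * Hd h1 (t, x))
        + (Hd g2 (t, x) * h2 (t, x) + g2 (t, x) * Hd h2 (t, x))) x :=
    ((hgX0.mul hhX0).add (hgX1.mul hhX1)).add (hgX2.mul hhX2)
  -- rewrite the energy density
  have hEfun : (fun t x => (∑ j, (R j t x) ^ 2) + (∑ j, (S j t x) ^ 2))
      = fun a b => 2 * (g0 (a, b) ^ 2 + g1 (a, b) ^ 2 + g2 (a, b) ^ 2)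
          + 2 * ((α + (γ - α) * n 0 a b ^ 2)
              * (h0 (a, b) ^ 2 + h1 (a, b) ^ 2 + h2 (a, b) ^ 2)) := by
    funext a b
    simp only [hR, hS, hGeq0, hGeq1, hGeq2, hHeq0, hHeq1, hHeq2, Fin.sum_univ_three]
    linear_combination
      (2 * (h0 (a, b) ^ 2 + h1 (a, b) ^ 2 + h2 (a, b) ^ 2)) * hcsq a b
  have hFfun : (fun t x => c (n 0 t x) * ((∑ j, (R j t x) ^ 2) - (∑ j, (S j t x) ^ 2)))
      = fun a b => 4 * ((α + (γ - α) * n 0 a b ^ 2)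
          * (g0 (a, b) * h0 (a, b) + g1 (a, b) * h1 (a, b) + g2 (a, b) * h2 (a, b))) := by
    funext a b
    simp only [hR, hS, hGeq0, hGeq1, hGeq2, hHeq0, hHeq1, hHeq2, Fin.sum_univ_three]
    linear_combination
      (4 * (g0 (a, b) * h0 (a, b) + g1 (a, b) * h1 (a, b) + g2 (a, b) * h2 (a, b))) * hcsq a b
  rw [hEfun, hFfun]
  -- compute the two outer derivatives
  have hEder : HasDerivAt (fun τ => 2 * (g0 (τ, x) ^ 2 + g1 (τ, x) ^ 2 + g2 (τ, x) ^ 2)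
        + 2 * ((α + (γ - α) * n 0 τ x ^ 2)
            * (h0 (τ, x) ^ 2 + h1 (τ, x) ^ 2 + h2 (τ, x) ^ 2)))
      (4 * (g0 (t, x) * Gd g0 (t, x) + g1 (t, x) * Gd g1 (t, x) + g2 (t, x) * Gd g2 (t, x))
        + 4 * (γ - α) * n 0 t x * g0 (t, x)
            * (h0 (t, x) ^ 2 + h1 (t, x) ^ 2 + h2 (t, x) ^ 2)
        + 4 * (α + (γ - α) * n 0 t x ^ 2)
            * (h0 (t, x) * Gd h0 (t, x) + h1 (t, x) * Gd h1 (t, x)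
              + h2 (t, x) * Gd h2 (t, x))) t :=
    congr_d ((hUsqT.const_mul 2).add ((hqT.mul hVsqT).const_mul 2)) (by ring)
  have hFder : HasDerivAt (fun y => 4 * ((α + (γ - α) * n 0 t y ^ 2)
        * (g0 (t, y) * h0 (t, y) + g1 (t, y) * h1 (t, y) + g2 (t, y) * h2 (t, y))))
      (8 * (γ - α) * n 0 t x * h0 (t, x)
          * (g0 (t, x) * h0 (t, x) + g1 (t, x) * h1 (t, x) + g2 (t, x) * h2 (t, x))
        + 4 * (α + (γ - α) * n 0 t x ^ 2)
            * (Hd g0 (t, x) * h0 (t, x) + g0 (t, x) * Hd h0 (t, x)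
              + Hd g1 (t, x) * h1 (t, x) + g1 (t, x) * Hd h1 (t, x)
              + Hd g2 (t, x) * h2 (t, x) + g2 (t, x) * Hd h2 (t, x))) x :=
    congr_d ((hqX.mul hUVX).const_mul 4) (by ring)
  have hE := hEder.deriv
  have hF := hFder.deriv
  rw [show ptd (fun a b => 2 * (g0 (a, b) ^ 2 + g1 (a, b) ^ 2 + g2 (a, b) ^ 2)
        + 2 * ((α + (γ - α) * n 0 a b ^ 2)
            * (h0 (a, b) ^ 2 + h1 (a, b) ^ 2 + h2 (a, b) ^ 2))) t x = _ from hE,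
      show pxd (fun a b => 4 * ((α + (γ - α) * n 0 a b ^ 2)
          * (g0 (a, b) * h0 (a, b) + g1 (a, b) * h1 (a, b) + g2 (a, b) * h2 (a, b)))) t x
        = _ from hF]
  -- process the wave equations
  have hw0 := hwave 0 t x
  have hw1 := hwave 1 t x
  have hw2 := hwave 2 t x
  simp only [hζ0, hGeq0, hGeq1, hGeq2, hHeq0, hHeq1, hHeq2, hcsq, Fin.sum_univ_three] at hw0
  simp only [hζ1, hGeq0, hGeq1, hGeq2, hHeq0, hHeq1, hHeq2, hcsq, Fin.sum_univ_three] at hw1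
  simp only [hζ2, hGeq0, hGeq1, hGeq2, hHeq0, hHeq1, hHeq2, hcsq, Fin.sum_univ_three] at hw2
  have hTT0 : ptd (fun a b => g0 (a, b)) t x = Gd g0 (t, x) := hgT0.deriv
  have hTT1 : ptd (fun a b => g1 (a, b)) t x = Gd g1 (t, x) := hgT1.deriv
  have hTT2 : ptd (fun a b => g2 (a, b)) t x = Gd g2 (t, x) := hgT2.deriv
  have hPX0 : pxd (fun a b => (α + (γ - α) * n 0 a b ^ 2) * h0 (a, b)) t x
      = 2 * (γ - α) * n 0 t x * h0 (t, x) * h0 (t, x)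
        + (α + (γ - α) * n 0 t x ^ 2) * Hd h0 (t, x) := (hqX.mul hhX0).deriv
  have hPX1 : pxd (fun a b => (α + (γ - α) * n 0 a b ^ 2) * h1 (a, b)) t x
      = 2 * (γ - α) * n 0 t x * h0 (t, x) * h1 (t, x)
        + (α + (γ - α) * n 0 t x ^ 2) * Hd h1 (t, x) := (hqX.mul hhX1).deriv
  have hPX2 : pxd (fun a b => (α + (γ - α) * n 0 a b ^ 2) * h2 (a, b)) t x
      = 2 * (γ - α) * n 0 t x * h0 (t, x) * h2 (t, x)
        + (α + (γ - α) * n 0 t x ^ 2) * Hd h2 (t, x) := (hqX.mul hhX2).deriv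
  rw [hTT0, hPX0] at hw0
  rw [hTT1, hPX1] at hw1
  rw [hTT2, hPX2] at hw2
  -- constraints from |n| = 1
  have hconT : HasDerivAt (fun τ => n 0 τ x ^ 2 + n 1 τ x ^ 2 + n 2 τ x ^ 2)
      (2 * n 0 t x * g0 (t, x) + 2 * n 1 t x * g1 (t, x) + 2 * n 2 t x * g2 (t, x)) t :=
    congr_d (((hnT0.pow 2).add (hnT1.pow 2)).add (hnT2.pow 2)) (by push_cast; ring)
  have hfun1T : (fun τ => n 0 τ x ^ 2 + n 1 τ x ^ 2 + n 2 τ x ^ 2) = fun _ : ℝ => (1 : ℝ) := by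
    funext τ; simpa [Fin.sum_univ_three] using hunit τ x
  have hNU : 2 * n 0 t x * g0 (t, x) + 2 * n 1 t x * g1 (t, x) + 2 * n 2 t x * g2 (t, x) = 0 := by
    have h2 : HasDerivAt (fun τ => n 0 τ x ^ 2 + n 1 τ x ^ 2 + n 2 τ x ^ 2) 0 t := by
      rw [hfun1T]; exact hasDerivAt_const t 1
    exact hconT.unique h2
  -- final algebra
  linear_combination
    (4 * g0 (t, x)) * hw0 + (4 * g1 (t, x)) * hw1 + (4 * g2 (t, x)) * hw2
    - (4 * (α + (γ - α) * n 0 t x ^ 2) * h0 (t, x)) * hs0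
    - (4 * (α + (γ - α) * n 0 t x ^ 2) * h1 (t, x)) * hs1
    - (4 * (α + (γ - α) * n 0 t x ^ 2) * h2 (t, x)) * hs2
    + (2 * (-(g0 (t, x) ^ 2 + g1 (t, x) ^ 2 + g2 (t, x) ^ 2)
        + (2 * (α + (γ - α) * n 0 t x ^ 2) - α)
          * (h0 (t, x) ^ 2 + h1 (t, x) ^ 2 + h2 (t, x) ^ 2))) * hNU
end

section
/- Let I₀,…,I₅: [0,T] → [0,∞) be absolutely continuous functions and suppose there exist a constant C > 0, an integrable function G ≥ 0 on [0,T], nonnegative measurable 'dissipation' terms D_k, and index sets F_k^l, F_k^h ⊆ {0,…,5} with the relation k ↦ F_k^h acyclic, such that dI_k/dt ≤ C·Σ_{ℓ∈F_k^l}(I_ℓ + D_ℓ^{1/2}I_ℓ^{1/2}) + C·Σ_{ℓ∈F_k^h}(I_ℓ + D_ℓ) + G(t)I_k − D_k for a.e. t. Then there exist positive weights κ₀,…,κ₅ (chosen in a hierarchy compatible with the acyclic relation) such that W(t) := Σ_k κ_k I_k satisfies dW/dt ≤ a(t)W for an integrable function a, and hence W(t) ≤ W(0)·exp(∫₀ᵗ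 a(s)ds) for all t ∈ [0,T]. -/
open MeasureTheory
open scoped BigOperators

open Set

private lemma pow_step {x y : ℝ} (hx : 0 ≤ x) (hxy : x ≤ y) (k : ℕ) :
    ((k : ℝ) + 1) * (x ^ k * (y - x)) ≤ y ^ (k + 1) - x ^ (k + 1) := by
  have h := geom_sum₂_mul y x (k + 1)
  rw [← h]
  have hterm : ∀ i ∈ Finset.range (k + 1), x ^ k ≤ y ^ i * x ^ (k + 1 - 1 - i) := by
    intro i hi
    have hik : i ≤ k := Nat.lt_succ_iff.mp (Finset.mem_range.mp hi)
    have h1 : x ^ k = x ^ i * x ^ (k + 1 - 1 - i) := by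
      rw [← pow_add]; congr 1; omega
    rw [h1]
    exact mul_le_mul_of_nonneg_right (pow_le_pow_left₀ hx hxy i) (pow_nonneg hx _)
  have hsum : ((k : ℝ) + 1) * x ^ k ≤ ∑ i ∈ Finset.range (k + 1), y ^ i * x ^ (k + 1 - 1 - i) := by
    have := Finset.card_nsmul_le_sum (Finset.range (k + 1))
      (fun i => y ^ i * x ^ (k + 1 - 1 - i)) (x ^ k) hterm
    simpa [Finset.card_range, nsmul_eq_mul, add_comm] using this
  have hyx : 0 ≤ y - x := sub_nonneg.mpr hxy
  calc ((k : ℝ) + 1) * (x ^ k * (y - x)) = (((k : ℝ) + 1) * x ^ k) * (y - x) := by ring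
    _ ≤ (∑ i ∈ Finset.range (k + 1), y ^ i * x ^ (k + 1 - 1 - i)) * (y - x) :=
        mul_le_mul_of_nonneg_right hsum hyx

private lemma step_alg {K xk yk xk1 yk1 x y e Sold Spiece : ℝ}
    (hK : 0 < K) (hpow : K * (xk * (y - x)) ≤ yk1 - xk1)
    (hykxk : 0 ≤ yk - xk) (hd : y - x ≤ e)
    (hold : K * Sold ≤ xk1 + K * e * xk)
    (hpiece : Spiece ≤ yk * (y - x)) :
    K * (Sold + Spiece) ≤ yk1 + K * e * yk := by
  have h1 : K * Spiece ≤ K * (yk * (y - x)) := mul_le_mul_of_nonneg_left hpiece hK.le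
  have h2 : (K * (yk - xk)) * (y - x) ≤ (K * (yk - xk)) * e :=
    mul_le_mul_of_nonneg_left hd (mul_nonneg hK.le hykxk)
  nlinarith [h1, h2, hpow, hold]

private lemma key_integral {T : ℝ} {a : ℝ → ℝ} (ha : ∀ s, 0 ≤ a s)
    (haint : IntegrableOn a (Icc 0 T)) (k : ℕ) {t : ℝ} (ht : t ∈ Icc (0 : ℝ) T) :
    (∫ s in Ioc (0 : ℝ) t, a s * (∫ u in Ioc (0 : ℝ) s, a u) ^ k)
      ≤ (∫ s in Ioc (0 : ℝ) t, a s) ^ (k + 1) / (k + 1) := by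
  set A : ℝ → ℝ := fun s => ∫ u in Ioc (0 : ℝ) s, a u with hA
  set K : ℝ := (k : ℝ) + 1 with hK
  have hKpos : 0 < K := by rw [hK]; positivity
  have hsubset : ∀ u v : ℝ, 0 ≤ u → v ≤ T → Ioc u v ⊆ Icc 0 T := by
    intro u v hu hv x hx
    exact ⟨le_trans hu hx.1.le, le_trans hx.2 hv⟩
  have hint : ∀ u v : ℝ, 0 ≤ u → v ≤ T → IntegrableOn a (Ioc u v) :=
    fun u v hu hv => haint.mono_set (hsubset u v hu hv)
  have hsplit : ∀ u v : ℝ, 0 ≤ u → u ≤ v → v ≤ T →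
      A v = A u + ∫ s in Ioc u v, a s := by
    intro u v h0 huv hvT
    have hun : Ioc (0 : ℝ) u ∪ Ioc u v = Ioc 0 v := Ioc_union_Ioc_eq_Ioc h0 huv
    rw [hA]
    simp only
    rw [← hun, setIntegral_union (Ioc_disjoint_Ioc_of_le le_rfl) measurableSet_Ioc
      (hint 0 u le_rfl (le_trans huv hvT)) (hint u v h0 hvT)]
  have hA0 : A 0 = 0 := by simp [hA]
  have hAnn : ∀ s : ℝ, 0 ≤ A s := by
    intro s
    exact setIntegral_nonneg measurableSet_Ioc fun x _ => ha x
  have hmono : ∀ u v : ℝ, 0 ≤ u → u ≤ v → v ≤ T → A u ≤ A v := by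
    intro u v h0 huv hvT
    rw [hsplit u v h0 huv hvT]
    have : 0 ≤ ∫ s in Ioc u v, a s := setIntegral_nonneg measurableSet_Ioc fun x _ => ha x
    linarith
  have hAcont : ContinuousOn A (Icc 0 T) := intervalIntegral.continuousOn_primitive haint
  have hipow : IntegrableOn (fun s => a s * A s ^ k) (Icc 0 T) :=
    haint.mul_continuousOn (hAcont.pow k) isCompact_Icc
  set L := A t with hL
  have hLnn : 0 ≤ L := hAnn t
  refine le_of_forall_pos_le_add ?_
  intro ε hε
  set ε' : ℝ := ε / (L ^ k + 1) with hε'def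
  have hLk : (0 : ℝ) ≤ L ^ k := pow_nonneg hLnn k
  have hε' : 0 < ε' := div_pos hε (by linarith)
  have hunif := (isCompact_Icc.uniformContinuousOn_of_continuous hAcont)
  rw [Metric.uniformContinuousOn_iff] at hunif
  obtain ⟨δ, hδ, Hδ⟩ := hunif ε' hε'
  set N : ℕ := ⌈t / δ⌉₊ + 1 with hNdef
  have hNpos : 0 < (N : ℝ) := by positivity
  have htN : t / N < δ := by
    have h1 : t / δ < N := by
      have h2 : t / δ ≤ (⌈t / δ⌉₊ : ℝ) := Nat.le_ceil (t / δ)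
      push_cast [hNdef]
      linarith
    rw [div_lt_iff₀ hNpos]
    rw [div_lt_iff₀ hδ] at h1
    linarith
  set p : ℕ → ℝ := fun i => (i : ℝ) * t / N with hp
  have hp0 : p 0 = 0 := by simp [hp]
  have hpN : p N = t := by
    rw [hp]; field_simp
  have hpmono : ∀ i j : ℕ, i ≤ j → p i ≤ p j := by
    intro i j hij
    have hij' : (i : ℝ) ≤ j := by exact_mod_cast hij
    have ht0 : 0 ≤ t := ht.1
    show (i : ℝ) * t / N ≤ (j : ℝ) * t / N
    gcongr
  have hpmem : ∀ i : ℕ, i ≤ N → p i ∈ Icc (0 : ℝ) T := by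
    intro i hi
    constructor
    · rw [← hp0]; exact hpmono 0 i (Nat.zero_le i)
    · calc p i ≤ p N := hpmono i N hi
        _ = t := hpN
        _ ≤ T := ht.2
  have hdist : ∀ i : ℕ, i + 1 ≤ N → A (p (i + 1)) - A (p i) < ε' := by
    intro i hi
    have h1 : dist (p (i + 1)) (p i) < δ := by
      rw [Real.dist_eq]
      have heq : p (i + 1) - p i = t / N := by
        rw [hp]; simp only; push_cast; ring
      rw [heq, abs_of_nonneg (div_nonneg ht.1 hNpos.le)]
      · exact htN
    have h2 := Hδ (p (i + 1)) (hpmem (i + 1) hi) (p i) (hpmem i (le_trans (Nat.le_succ i) hi)) h1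
    rw [Real.dist_eq] at h2
    calc A (p (i + 1)) - A (p i) ≤ |A (p (i + 1)) - A (p i)| := le_abs_self _
      _ < ε' := h2
  have main : ∀ i : ℕ, i ≤ N →
      K * (∫ s in Ioc (0 : ℝ) (p i), a s * A s ^ k)
        ≤ A (p i) ^ (k + 1) + K * ε' * A (p i) ^ k := by
    intro i
    induction i with
    | zero =>
      intro _
      rw [hp0, hA0]
      simp only [Ioc_self, Measure.restrict_empty, integral_zero_measure, mul_zero]
      have h1 : (0:ℝ) ≤ (0:ℝ) ^ (k + 1) := by positivity
      have h2 : (0:ℝ) ≤ K * ε' * (0:ℝ) ^ k :=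
        mul_nonneg (mul_nonneg hKpos.le hε'.le) (by positivity)
      linarith
    | succ i IH =>
      intro hi
      have hii : i ≤ N := le_trans (Nat.le_succ i) hi
      have hIH := IH hii
      have h0pi : 0 ≤ p i := (hpmem i hii).1
      have hpiT : p (i + 1) ≤ T := (hpmem (i + 1) hi).2
      have hple : p i ≤ p (i + 1) := hpmono i (i + 1) (Nat.le_succ i)
      have hxnn : 0 ≤ A (p i) := hAnn _
      have hxy : A (p i) ≤ A (p (i + 1)) := hmono _ _ h0pi hple hpiT
      have hΔ : A (p (i + 1)) - A (p i) < ε' := hdist i hi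
      have hsplitI : (∫ s in Ioc (0 : ℝ) (p (i + 1)), a s * A s ^ k)
          = (∫ s in Ioc (0 : ℝ) (p i), a s * A s ^ k)
            + ∫ s in Ioc (p i) (p (i + 1)), a s * A s ^ k := by
        have hun : Ioc (0 : ℝ) (p i) ∪ Ioc (p i) (p (i + 1)) = Ioc 0 (p (i + 1)) :=
          Ioc_union_Ioc_eq_Ioc h0pi hple
        rw [← hun, setIntegral_union (Ioc_disjoint_Ioc_of_le le_rfl) measurableSet_Ioc
          (hipow.mono_set (hsubset 0 (p i) le_rfl (le_trans hple hpiT)))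
          (hipow.mono_set (hsubset (p i) (p (i + 1)) h0pi hpiT))]
      have hpiece : (∫ s in Ioc (p i) (p (i + 1)), a s * A s ^ k)
          ≤ A (p (i + 1)) ^ k * (A (p (i + 1)) - A (p i)) := by
        have h1 : (∫ s in Ioc (p i) (p (i + 1)), a s * A s ^ k)
            ≤ ∫ s in Ioc (p i) (p (i + 1)), a s * A (p (i + 1)) ^ k := by
          apply setIntegral_mono_on
            (hipow.mono_set (hsubset (p i) (p (i + 1)) h0pi hpiT))
            ((hint (p i) (p (i + 1)) h0pi hpiT).mul_const _)
            measurableSet_Ioc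
          intro s hs
          have hsA : A s ≤ A (p (i + 1)) := hmono s (p (i + 1)) (le_trans h0pi hs.1.le) hs.2 hpiT
          exact mul_le_mul_of_nonneg_left
            (pow_le_pow_left₀ (hAnn s) hsA k) (ha s)
        have h2 : (∫ s in Ioc (p i) (p (i + 1)), a s * A (p (i + 1)) ^ k)
            = A (p (i + 1)) ^ k * (A (p (i + 1)) - A (p i)) := by
          rw [integral_mul_const]
          have h3 := hsplit (p i) (p (i + 1)) h0pi hple hpiT
          have h4 : (∫ s in Ioc (p i) (p (i + 1)), a s) = A (p (i + 1)) - A (p i) := by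
            linarith
          rw [h4]; ring
        rw [h2] at h1
        exact h1
      rw [hsplitI]
      have hstep := pow_step hxnn hxy k
      have hykxk : (0 : ℝ) ≤ A (p (i + 1)) ^ k - A (p i) ^ k := by
        have := pow_le_pow_left₀ hxnn hxy k
        linarith
      exact step_alg hKpos hstep hykxk hΔ.le hIH hpiece
  have hfin := main N le_rfl
  rw [hpN] at hfin
  have hlast : ε' * L ^ k ≤ ε := by
    rw [hε'def, div_mul_eq_mul_div, div_le_iff₀ (by linarith : (0:ℝ) < L ^ k + 1)]
    nlinarith
  have h2 : (∫ s in Ioc (0 : ℝ) t, a s * A s ^ k) ≤ (L ^ (k + 1) + K * ε' * L ^ k) / K := by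
    rw [le_div_iff₀ hKpos]
    nlinarith [hfin]
  have h3 : (L ^ (k + 1) + K * ε' * L ^ k) / K = L ^ (k + 1) / K + ε' * L ^ k := by
    field_simp
  rw [h3] at h2
  calc (∫ s in Ioc (0 : ℝ) t, a s * A s ^ k) ≤ L ^ (k + 1) / K + ε' * L ^ k := h2
    _ ≤ L ^ (k + 1) / K + ε := by linarith

private theorem gron {T : ℝ} {W W' a : ℝ → ℝ}
    (hW : ∀ t ∈ Set.Icc (0 : ℝ) T, HasDerivAt W (W' t) t)
    (hW'int : IntegrableOn W' (Icc 0 T))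
    (hWnn : ∀ t ∈ Set.Icc (0 : ℝ) T, 0 ≤ W t)
    (ha : ∀ s, 0 ≤ a s) (haint : IntegrableOn a (Icc 0 T))
    (hineq : ∀ᵐ t ∂(volume.restrict (Icc (0 : ℝ) T)), W' t ≤ a t * W t) :
    ∀ t ∈ Set.Icc (0 : ℝ) T, W t ≤ W 0 * Real.exp (∫ s in Ioc (0 : ℝ) t, a s) := by
  by_cases hT0 : 0 ≤ T
  swap
  · intro t ht; exact absurd (le_trans ht.1 ht.2) hT0
  set A : ℝ → ℝ := fun s => ∫ u in Ioc (0 : ℝ) s, a u with hA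
  have hsubset : ∀ u v : ℝ, 0 ≤ u → v ≤ T → Ioc u v ⊆ Icc 0 T := by
    intro u v hu hv x hx
    exact ⟨le_trans hu hx.1.le, le_trans hx.2 hv⟩
  have hAnn : ∀ s : ℝ, 0 ≤ A s :=
    fun s => setIntegral_nonneg measurableSet_Ioc fun x _ => ha x
  have hAcont : ContinuousOn A (Icc 0 T) := intervalIntegral.continuousOn_primitive haint
  have hWcont : ContinuousOn W (Icc 0 T) :=
    fun s hs => (hW s hs).continuousAt.continuousWithinAt
  obtain ⟨M, hMb⟩ := isCompact_Icc.exists_bound_of_continuousOn hWcont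
  have hM : ∀ s ∈ Icc (0 : ℝ) T, W s ≤ M := by
    intro s hs
    calc W s ≤ ‖W s‖ := le_abs_self _
      _ ≤ M := hMb s hs
  have hMnn : 0 ≤ M := le_trans (norm_nonneg (W 0)) (hMb 0 ⟨le_rfl, hT0⟩)
  have hW0nn : 0 ≤ W 0 := hWnn 0 ⟨le_rfl, hT0⟩
  have haW_int : IntegrableOn (fun s => a s * W s) (Icc 0 T) :=
    haint.mul_continuousOn hWcont isCompact_Icc
  have hgint : ∀ j : ℕ, IntegrableOn (fun s => a s * A s ^ j) (Icc 0 T) :=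
    fun j => haint.mul_continuousOn (hAcont.pow j) isCompact_Icc
  have hFTC : ∀ t ∈ Icc (0 : ℝ) T, W t = W 0 + ∫ s in Ioc (0 : ℝ) t, W' s := by
    intro t ht
    have hsub : Icc (0 : ℝ) t ⊆ Icc 0 T := Icc_subset_Icc le_rfl ht.2
    have hii : IntervalIntegrable W' volume 0 t :=
      (intervalIntegrable_iff_integrableOn_Ioc_of_le ht.1).mpr
        (hW'int.mono_set (hsubset 0 t le_rfl ht.2))
    have h1 : (∫ s in (0 : ℝ)..t, W' s) = W t - W 0 := by
      apply intervalIntegral.integral_eq_sub_of_hasDerivAt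
      · intro s hs
        rw [uIcc_of_le ht.1] at hs
        exact hW s (hsub hs)
      · exact hii
    rw [intervalIntegral.integral_of_le ht.1] at h1
    linarith
  have hWleint : ∀ t ∈ Icc (0 : ℝ) T, W t ≤ W 0 + ∫ s in Ioc (0 : ℝ) t, a s * W s := by
    intro t ht
    rw [hFTC t ht]
    have hsub := hsubset 0 t le_rfl ht.2
    have h1 : (∫ s in Ioc (0 : ℝ) t, W' s) ≤ ∫ s in Ioc (0 : ℝ) t, a s * W s := by
      apply integral_mono_ae (hW'int.mono_set hsub) (haW_int.mono_set hsub)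
      exact ae_restrict_of_ae_restrict_of_subset hsub hineq
    linarith
  have claim : ∀ n : ℕ, ∀ t ∈ Icc (0 : ℝ) T,
      W t ≤ W 0 * (∑ j ∈ Finset.range n, A t ^ j / (Nat.factorial j : ℝ)) + M * A t ^ n / (Nat.factorial n : ℝ) := by
    intro n
    induction n with
    | zero =>
      intro t ht
      simpa using hM t ht
    | succ n IH =>
      intro t ht
      have hsub := hsubset 0 t le_rfl ht.2
      have h1 : (∫ s in Ioc (0 : ℝ) t, a s * W s)
          ≤ ∫ s in Ioc (0 : ℝ) t,
              ((∑ j ∈ Finset.range n, (W 0 / (Nat.factorial j : ℝ)) * (a s * A s ^ j))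
                + (M / (Nat.factorial n : ℝ)) * (a s * A s ^ n)) := by
        apply setIntegral_mono_on (haW_int.mono_set hsub) ?_ measurableSet_Ioc
        · intro s hs
          have hsIcc : s ∈ Icc (0 : ℝ) T := hsub hs
          have h2 := IH s hsIcc
          have h3 := mul_le_mul_of_nonneg_left h2 (ha s)
          calc a s * W s
              ≤ a s * (W 0 * (∑ j ∈ Finset.range n, A s ^ j / (Nat.factorial j : ℝ))
                + M * A s ^ n / (Nat.factorial n : ℝ)) := h3
            _ = (∑ j ∈ Finset.range n, (W 0 / (Nat.factorial j : ℝ)) * (a s * A s ^ j))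
                + (M / (Nat.factorial n : ℝ)) * (a s * A s ^ n) := by
              rw [Finset.mul_sum, mul_add, Finset.mul_sum]
              congr 1
              · exact Finset.sum_congr rfl fun j _ => by ring
              · ring
        · apply Integrable.add
          · apply integrable_finset_sum
            intro j _
            exact (((hgint j).mono_set hsub)).const_mul _
          · exact ((hgint n).mono_set hsub).const_mul _
      have h4 : (∫ s in Ioc (0 : ℝ) t,
            ((∑ j ∈ Finset.range n, (W 0 / (Nat.factorial j : ℝ)) * (a s * A s ^ j))
              + (M / (Nat.factorial n : ℝ)) * (a s * A s ^ n)))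
          = (∑ j ∈ Finset.range n, (W 0 / (Nat.factorial j : ℝ)) * ∫ s in Ioc (0 : ℝ) t, a s * A s ^ j)
            + (M / (Nat.factorial n : ℝ)) * ∫ s in Ioc (0 : ℝ) t, a s * A s ^ n := by
        rw [integral_add, integral_finset_sum]
        · congr 1
          · apply Finset.sum_congr rfl
            intro j _
            rw [integral_const_mul]
          · rw [integral_const_mul]
        · intro j _
          exact ((hgint j).mono_set hsub).const_mul _
        · apply integrable_finset_sum
          intro j _
          exact ((hgint j).mono_set hsub).const_mul _
        · exact ((hgint n).mono_set hsub).const_mul _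
      have hkey : ∀ j : ℕ, (∫ s in Ioc (0 : ℝ) t, a s * A s ^ j) ≤ A t ^ (j + 1) / ((j : ℝ) + 1) :=
        fun j => key_integral ha haint j ht
      have h5 : (∑ j ∈ Finset.range n, (W 0 / (Nat.factorial j : ℝ)) * ∫ s in Ioc (0 : ℝ) t, a s * A s ^ j)
          ≤ ∑ j ∈ Finset.range n, W 0 * (A t ^ (j + 1) / (Nat.factorial (j+1) : ℝ)) := by
        apply Finset.sum_le_sum
        intro j _
        have hj : (0 : ℝ) ≤ W 0 / (Nat.factorial j : ℝ) := div_nonneg hW0nn (by positivity)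
        calc (W 0 / (Nat.factorial j : ℝ)) * ∫ s in Ioc (0 : ℝ) t, a s * A s ^ j
            ≤ (W 0 / (Nat.factorial j : ℝ)) * (A t ^ (j + 1) / ((j : ℝ) + 1)) :=
              mul_le_mul_of_nonneg_left (hkey j) hj
          _ = W 0 * (A t ^ (j + 1) / (Nat.factorial (j+1) : ℝ)) := by
              have hfac : (Nat.factorial (j+1) : ℝ) = ((j:ℝ)+1) * (Nat.factorial j : ℝ) := by
                rw [Nat.factorial_succ]; push_cast; ring
              have hj1 : (Nat.factorial j : ℝ) ≠ 0 := by positivity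
              have hj2 : ((j:ℝ)+1) ≠ 0 := by positivity
              rw [hfac]
              field_simp
      have h6 : (M / (Nat.factorial n : ℝ)) * (∫ s in Ioc (0 : ℝ) t, a s * A s ^ n)
          ≤ M * A t ^ (n + 1) / (Nat.factorial (n+1) : ℝ) := by
        have hn : (0 : ℝ) ≤ M / (Nat.factorial n : ℝ) := div_nonneg hMnn (by positivity)
        calc (M / (Nat.factorial n : ℝ)) * (∫ s in Ioc (0 : ℝ) t, a s * A s ^ n)
            ≤ (M / (Nat.factorial n : ℝ)) * (A t ^ (n + 1) / ((n : ℝ) + 1)) :=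
              mul_le_mul_of_nonneg_left (hkey n) hn
          _ = M * A t ^ (n + 1) / (Nat.factorial (n+1) : ℝ) := by
              have hfac : (Nat.factorial (n+1) : ℝ) = ((n:ℝ)+1) * (Nat.factorial n : ℝ) := by
                rw [Nat.factorial_succ]; push_cast; ring
              have hn1 : (Nat.factorial n : ℝ) ≠ 0 := by positivity
              have hn2 : ((n:ℝ)+1) ≠ 0 := by positivity
              rw [hfac]
              field_simp
      have h7 : W 0 + ∑ j ∈ Finset.range n, W 0 * (A t ^ (j + 1) / (Nat.factorial (j+1) : ℝ))
          = W 0 * ∑ j ∈ Finset.range (n + 1), A t ^ j / (Nat.factorial j : ℝ) := by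
        have h0 : A t ^ 0 / (Nat.factorial 0 : ℝ) = 1 := by simp
        rw [Finset.sum_range_succ', mul_add, Finset.mul_sum, h0, mul_one]
        exact add_comm _ _
      calc W t ≤ W 0 + ∫ s in Ioc (0 : ℝ) t, a s * W s := hWleint t ht
        _ ≤ W 0 + ((∑ j ∈ Finset.range n, (W 0 / (Nat.factorial j : ℝ)) * ∫ s in Ioc (0 : ℝ) t, a s * A s ^ j)
              + (M / (Nat.factorial n : ℝ)) * ∫ s in Ioc (0 : ℝ) t, a s * A s ^ n) := by
            rw [← h4]; linarith [h1]
        _ ≤ W 0 + ((∑ j ∈ Finset.range n, W 0 * (A t ^ (j + 1) / (Nat.factorial (j+1) : ℝ)))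
              + M * A t ^ (n + 1) / (Nat.factorial (n+1) : ℝ)) := by linarith [h5, h6]
        _ = W 0 * (∑ j ∈ Finset.range (n + 1), A t ^ j / (Nat.factorial j : ℝ))
              + M * A t ^ (n + 1) / (Nat.factorial (n+1) : ℝ) := by rw [← h7]; ring
  intro t ht
  have hbound : ∀ n : ℕ, W t ≤ W 0 * Real.exp (A t) + M * A t ^ n / (Nat.factorial n : ℝ) := by
    intro n
    have h1 := claim n t ht
    have h2 : (∑ j ∈ Finset.range n, A t ^ j / (Nat.factorial j : ℝ)) ≤ Real.exp (A t) :=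
      Real.sum_le_exp_of_nonneg (hAnn t) n
    nlinarith [mul_le_mul_of_nonneg_left h2 hW0nn]
  have hlim : Filter.Tendsto (fun n : ℕ => W 0 * Real.exp (A t) + M * A t ^ n / (Nat.factorial n : ℝ))
      Filter.atTop (nhds (W 0 * Real.exp (A t))) := by
    have h1 : Filter.Tendsto (fun n : ℕ => (A t) ^ n / (Nat.factorial n : ℝ)) Filter.atTop (nhds 0) :=
      FloorSemiring.tendsto_pow_div_factorial_atTop (A t)
    have h2 := (h1.const_mul M).const_add (W 0 * Real.exp (A t))
    simp only [mul_zero, add_zero] at h2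
    convert h2 using 2
    ring
  exact ge_of_tendsto' hlim hbound

/-- Abstract weighted Grönwall lemma with an acyclic high-order coupling graph:
there exist positive weights κ_k such that W = Σ κ_k I_k satisfies
dW/dt ≤ a(t)W for an integrable a, hence W(t) ≤ W(0)·exp(∫₀ᵗ a). -/
theorem stmt16 (T : ℝ) (hT : 0 < T) (C : ℝ) (hC : 0 < C)
    (I I' D : Fin 6 → ℝ → ℝ) (G : ℝ → ℝ)
    (Fl Fh : Fin 6 → Finset (Fin 6))
    (hIpos : ∀ k, ∀ t ∈ Set.Icc (0 : ℝ) T, 0 ≤ I k t)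
    (hI : ∀ k, ∀ t ∈ Set.Icc (0 : ℝ) T, HasDerivAt (I k) (I' k t) t)
    (hI'int : ∀ k, IntegrableOn (I' k) (Set.Icc 0 T))
    (hD : ∀ k t, 0 ≤ D k t) (hDm : ∀ k, Measurable (D k))
    (hG : ∀ t, 0 ≤ G t) (hGint : IntegrableOn G (Set.Icc 0 T))
    (hacyc : ∀ k, ¬ Relation.TransGen (fun a b => a ∈ Fh b) k k)
    (hineq : ∀ᵐ t ∂(volume.restrict (Set.Icc (0 : ℝ) T)), ∀ k,
      I' k t ≤ C * ∑ l ∈ Fl k, (I l t + Real.sqrt (D l t) * Real.sqrt (I l t))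
        + C * ∑ l ∈ Fh k, (I l t + D l t) + G t * I k t - D k t) :
    ∃ κ : Fin 6 → ℝ, (∀ k, 0 < κ k) ∧
      ∃ a : ℝ → ℝ, IntegrableOn a (Set.Icc 0 T) ∧
        (∀ᵐ t ∂(volume.restrict (Set.Icc (0 : ℝ) T)),
          ∑ k, κ k * I' k t ≤ a t * ∑ k, κ k * I k t) ∧
        ∀ t ∈ Set.Icc (0 : ℝ) T,
          ∑ k, κ k * I k t
            ≤ (∑ k, κ k * I k 0) * Real.exp (∫ s in Set.Ioc (0 : ℝ) t, a s) := by
  classical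
  obtain ⟨ρ, hρdef⟩ : ∃ ρ : Fin 6 → ℕ,
      ρ = fun x => {b | Relation.TransGen (fun a b => a ∈ Fh b) x b}.ncard := ⟨_, rfl⟩
  have hρlt : ∀ l b : Fin 6, l ∈ Fh b → ρ b < ρ l := by
    intro l b hlb
    rw [hρdef]
    simp only
    apply Set.ncard_lt_ncard _ (Set.toFinite _)
    constructor
    · intro c hc
      exact Relation.TransGen.head hlb hc
    · intro hsub
      exact hacyc b (hsub (Relation.TransGen.single hlb))
  obtain ⟨B, hBdef⟩ : ∃ B : ℝ, B = 6 * C + 1 := ⟨_, rfl⟩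
  have hB1 : 1 ≤ B := by rw [hBdef]; linarith
  have hB0 : 0 ≤ B := le_trans zero_le_one hB1
  obtain ⟨κ, hκdef⟩ : ∃ κ : Fin 6 → ℝ, κ = fun k => B ^ (ρ k) := ⟨_, rfl⟩
  have hκval : ∀ k, κ k = B ^ (ρ k) := by intro k; rw [hκdef]
  have hκ1 : ∀ k, 1 ≤ κ k := by
    intro k; rw [hκval k]; exact one_le_pow₀ hB1
  have hκpos : ∀ k, 0 < κ k := fun k => lt_of_lt_of_le one_pos (hκ1 k)
  refine ⟨κ, hκpos, ?_⟩
  obtain ⟨S, hSdef⟩ : ∃ S : ℝ, S = ∑ k, κ k := ⟨_, rfl⟩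
  have hSpos : 0 < S := by
    rw [hSdef]
    exact Finset.sum_pos (fun k _ => hκpos k) Finset.univ_nonempty
  have hS0 : S ≠ 0 := ne_of_gt hSpos
  have hC0 : C ≠ 0 := ne_of_gt hC
  -- high-order weight domination
  have hκh : ∀ l : Fin 6,
      C * ∑ k ∈ Finset.univ.filter (fun k => l ∈ Fh k), κ k ≤ κ l - 1 := by
    intro l
    by_cases hne : (Finset.univ.filter (fun k => l ∈ Fh k)).Nonempty
    · obtain ⟨k0, hk0⟩ := hne
      have hk0' : l ∈ Fh k0 := (Finset.mem_filter.mp hk0).2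
      have hρl : 0 < ρ l := lt_of_le_of_lt (Nat.zero_le _) (hρlt l k0 hk0')
      obtain ⟨m, hm⟩ : ∃ m, ρ l = m + 1 := ⟨ρ l - 1, by omega⟩
      have hbound : ∀ k ∈ Finset.univ.filter (fun k => l ∈ Fh k), κ k ≤ B ^ m := by
        intro k hk
        have h1 : ρ k < ρ l := hρlt l k (Finset.mem_filter.mp hk).2
        have h2 : ρ k ≤ m := by omega
        rw [hκval k]
        exact pow_le_pow_right₀ hB1 h2
      have hBm0 : (0:ℝ) ≤ B ^ m := pow_nonneg hB0 m
      have hsum : ∑ k ∈ Finset.univ.filter (fun k => l ∈ Fh k), κ k ≤ 6 * B ^ m := by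
        have h1 := Finset.sum_le_card_nsmul _ _ _ hbound
        have h2 : ((Finset.univ.filter (fun k => l ∈ Fh k)).card : ℝ) ≤ 6 := by
          have h4 := Finset.card_filter_le Finset.univ (fun k => l ∈ Fh k)
          have h3 : (Finset.univ : Finset (Fin 6)).card = 6 := by simp
          exact_mod_cast le_trans h4 (le_of_eq h3)
        rw [nsmul_eq_mul] at h1
        calc ∑ k ∈ Finset.univ.filter (fun k => l ∈ Fh k), κ k
            ≤ ((Finset.univ.filter (fun k => l ∈ Fh k)).card : ℝ) * B ^ m := h1
          _ ≤ 6 * B ^ m := mul_le_mul_of_nonneg_right h2 hBm0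
      have hBm1 : (1:ℝ) ≤ B ^ m := one_le_pow₀ hB1
      have hκl : κ l = B ^ (m + 1) := by rw [hκval l, hm]
      calc C * ∑ k ∈ Finset.univ.filter (fun k => l ∈ Fh k), κ k
          ≤ C * (6 * B ^ m) := mul_le_mul_of_nonneg_left hsum hC.le
        _ = (B - 1) * B ^ m := by rw [hBdef]; ring
        _ ≤ B ^ (m + 1) - 1 := by
            have h4 : B ^ (m + 1) = B * B ^ m := by rw [pow_succ]; ring
            nlinarith [hBm1, hB1]
        _ = κ l - 1 := by rw [hκl]
    · rw [Finset.not_nonempty_iff_eq_empty] at hne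
      rw [hne]
      simp only [Finset.sum_empty, mul_zero]
      linarith [hκ1 l]
  obtain ⟨ε, hεdef⟩ : ∃ ε : ℝ, ε = 1 / (2 * C * S) := ⟨_, rfl⟩
  have hεpos : 0 < ε := by
    rw [hεdef]
    apply div_pos one_pos
    have := mul_pos hC hSpos
    nlinarith
  have hε0 : ε ≠ 0 := ne_of_gt hεpos
  obtain ⟨c₄, hc₄def⟩ : ∃ c₄ : ℝ, c₄ = 1 / (4 * ε) := ⟨_, rfl⟩
  have hc₄pos : 0 < c₄ := by
    rw [hc₄def]; apply div_pos one_pos; nlinarith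
  obtain ⟨β, hβdef⟩ : ∃ β : ℝ, β = C * (1 + c₄) + C := ⟨_, rfl⟩
  have hβpos : 0 < β := by
    rw [hβdef]; nlinarith [mul_pos hC hc₄pos]
  obtain ⟨a, hadef⟩ : ∃ a : ℝ → ℝ, a = fun t => β * S + G t := ⟨_, rfl⟩
  have haval : ∀ t, a t = β * S + G t := by intro t; rw [hadef]
  have hβS : 0 < β * S := mul_pos hβpos hSpos
  have hann : ∀ s, 0 ≤ a s := by
    intro s
    rw [haval s]
    have := hG s
    linarith
  have haint : IntegrableOn a (Icc 0 T) := by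
    rw [hadef]
    exact (integrableOn_const measure_Icc_lt_top.ne).add hGint
  have hCεS : C * ε * S = 1 / 2 := by
    rw [hεdef]
    field_simp
  have hc₄ε : c₄ * (4 * ε) = 1 := by
    rw [hc₄def]
    field_simp
  -- the a.e. differential inequality
  have hae : ∀ᵐ t ∂(volume.restrict (Set.Icc (0 : ℝ) T)),
      ∑ k, κ k * I' k t ≤ a t * ∑ k, κ k * I k t := by
    filter_upwards [hineq, ae_restrict_mem measurableSet_Icc] with t hkt htmem
    have hY : ∀ l, Real.sqrt (D l t) * Real.sqrt (I l t) ≤ ε * D l t + c₄ * I l t := by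
      intro l
      have h1 : ∀ x y : ℝ, x * y ≤ ε * x ^ 2 + c₄ * y ^ 2 := by
        intro x y
        have h2 : (0:ℝ) ≤ (2 * ε * x - y) ^ 2 := sq_nonneg _
        have h3 : 4 * ε * (x * y) ≤ 4 * ε ^ 2 * x ^ 2 + y ^ 2 := by nlinarith
        nlinarith [mul_le_mul_of_nonneg_left h3 hc₄pos.le, hc₄ε, hεpos]
      have h5 := h1 (Real.sqrt (D l t)) (Real.sqrt (I l t))
      rwa [Real.sq_sqrt (hD l t), Real.sq_sqrt (hIpos l t htmem)] at h5
    obtain ⟨P, hPdef⟩ : ∃ P : Fin 6 → ℝ, P = fun k =>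
      C * ε * ∑ l ∈ Fl k, D l t + C * ∑ l ∈ Fh k, D l t - D k t := ⟨_, rfl⟩
    have hPval : ∀ k, P k = C * ε * ∑ l ∈ Fl k, D l t + C * ∑ l ∈ Fh k, D l t - D k t := by
      intro k; rw [hPdef]
    have hIsub : ∀ F : Finset (Fin 6), ∑ l ∈ F, I l t ≤ ∑ l, I l t := by
      intro F
      exact Finset.sum_le_sum_of_subset_of_nonneg (Finset.subset_univ F)
        (fun l _ _ => hIpos l t htmem)
    have hper : ∀ k, I' k t ≤ β * (∑ l, I l t) + G t * I k t + P k := by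
      intro k
      have h0 := hkt k
      have hFl : C * (∑ l ∈ Fl k, (I l t + Real.sqrt (D l t) * Real.sqrt (I l t)))
          ≤ C * (1 + c₄) * (∑ l, I l t) + C * ε * ∑ l ∈ Fl k, D l t := by
        have h2 : (∑ l ∈ Fl k, (I l t + Real.sqrt (D l t) * Real.sqrt (I l t)))
            ≤ (1 + c₄) * (∑ l, I l t) + ε * ∑ l ∈ Fl k, D l t := by
          calc (∑ l ∈ Fl k, (I l t + Real.sqrt (D l t) * Real.sqrt (I l t)))
              ≤ ∑ l ∈ Fl k, ((1 + c₄) * I l t + ε * D l t) := by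
                apply Finset.sum_le_sum
                intro l _
                have h6 := hY l
                nlinarith [hY l]
            _ = (1 + c₄) * (∑ l ∈ Fl k, I l t) + ε * ∑ l ∈ Fl k, D l t := by
                rw [Finset.sum_add_distrib, Finset.mul_sum, Finset.mul_sum]
            _ ≤ (1 + c₄) * (∑ l, I l t) + ε * ∑ l ∈ Fl k, D l t := by
                have h3 : (0:ℝ) ≤ 1 + c₄ := by linarith
                have h7 := mul_le_mul_of_nonneg_left (hIsub (Fl k)) h3
                linarith
        calc C * (∑ l ∈ Fl k, (I l t + Real.sqrt (D l t) * Real.sqrt (I l t)))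
            ≤ C * ((1 + c₄) * (∑ l, I l t) + ε * ∑ l ∈ Fl k, D l t) :=
              mul_le_mul_of_nonneg_left h2 hC.le
          _ = C * (1 + c₄) * (∑ l, I l t) + C * ε * ∑ l ∈ Fl k, D l t := by ring
      have hFh : C * (∑ l ∈ Fh k, (I l t + D l t))
          ≤ C * (∑ l, I l t) + C * ∑ l ∈ Fh k, D l t := by
        have h2 : (∑ l ∈ Fh k, (I l t + D l t))
            = (∑ l ∈ Fh k, I l t) + ∑ l ∈ Fh k, D l t := Finset.sum_add_distrib
        calc C * (∑ l ∈ Fh k, (I l t + D l t))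
            = C * (∑ l ∈ Fh k, I l t) + C * ∑ l ∈ Fh k, D l t := by rw [h2]; ring
          _ ≤ C * (∑ l, I l t) + C * ∑ l ∈ Fh k, D l t := by
              have h8 := mul_le_mul_of_nonneg_left (hIsub (Fh k)) hC.le
              linarith
      rw [hPval k, hβdef]
      linarith [h0, hFl, hFh]
    -- sum the per-k bounds
    have hsum1 : ∑ k, κ k * I' k t
        ≤ ∑ k, κ k * (β * (∑ l, I l t) + G t * I k t + P k) :=
      Finset.sum_le_sum fun k _ => mul_le_mul_of_nonneg_left (hper k) (hκpos k).le
    have hexp : ∑ k, κ k * (β * (∑ l, I l t) + G t * I k t + P k)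
        = β * (∑ l, I l t) * S + G t * (∑ k, κ k * I k t) + ∑ k, κ k * P k := by
      have e1 : (β * ∑ l, I l t) * S = ∑ k, κ k * (β * ∑ l, I l t) := by
        rw [hSdef, mul_comm, Finset.sum_mul]
      have e2 : G t * (∑ k, κ k * I k t) = ∑ k, κ k * (G t * I k t) := by
        rw [Finset.mul_sum]
        exact Finset.sum_congr rfl fun k _ => by ring
      rw [e1, e2, ← Finset.sum_add_distrib, ← Finset.sum_add_distrib]
      exact Finset.sum_congr rfl fun k _ => by ring
    -- ∑ κ P ≤ 0
    have hswap : ∀ E : Fin 6 → Finset (Fin 6),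
        ∑ k, ∑ l ∈ E k, κ k * D l t
          = ∑ l, (∑ k ∈ Finset.univ.filter (fun k => l ∈ E k), κ k) * D l t := by
      intro E
      rw [Finset.sum_comm' (t' := Finset.univ)
        (s' := fun l => Finset.univ.filter (fun k => l ∈ E k))]
      · apply Finset.sum_congr rfl
        intro l _
        rw [Finset.sum_mul]
      · intro x y
        simp [Finset.mem_filter]
    have hPsum : ∑ k, κ k * P k ≤ 0 := by
      have h1 : ∑ k, κ k * P k
          = ∑ l, ((C * ε * ∑ k ∈ Finset.univ.filter (fun k => l ∈ Fl k), κ k)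
              + (C * ∑ k ∈ Finset.univ.filter (fun k => l ∈ Fh k), κ k) - κ l) * D l t := by
        have h2 : ∀ k, κ k * P k
            = C * ε * (∑ l ∈ Fl k, κ k * D l t) + C * (∑ l ∈ Fh k, κ k * D l t)
              - κ k * D k t := by
          intro k
          rw [hPval k, ← Finset.mul_sum, ← Finset.mul_sum]
          ring
        calc ∑ k, κ k * P k
            = C * ε * (∑ k, ∑ l ∈ Fl k, κ k * D l t)
              + C * (∑ k, ∑ l ∈ Fh k, κ k * D l t) - ∑ k, κ k * D k t := by
              symm
              rw [Finset.mul_sum, Finset.mul_sum, ← Finset.sum_add_distrib,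
                ← Finset.sum_sub_distrib]
              exact Finset.sum_congr rfl fun k _ => by rw [h2 k]
          _ = C * ε * (∑ l, (∑ k ∈ Finset.univ.filter (fun k => l ∈ Fl k), κ k) * D l t)
              + C * (∑ l, (∑ k ∈ Finset.univ.filter (fun k => l ∈ Fh k), κ k) * D l t)
              - ∑ l, κ l * D l t := by rw [hswap Fl, hswap Fh]
          _ = ∑ l, ((C * ε * ∑ k ∈ Finset.univ.filter (fun k => l ∈ Fl k), κ k)
              + (C * ∑ k ∈ Finset.univ.filter (fun k => l ∈ Fh k), κ k) - κ l) * D l t := by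
              rw [Finset.mul_sum, Finset.mul_sum, ← Finset.sum_add_distrib,
                ← Finset.sum_sub_distrib]
              exact Finset.sum_congr rfl fun l _ => by ring
      rw [h1]
      apply Finset.sum_nonpos
      intro l _
      have hσl : ∑ k ∈ Finset.univ.filter (fun k => l ∈ Fl k), κ k ≤ S := by
        rw [hSdef]
        exact Finset.sum_le_sum_of_subset_of_nonneg (Finset.subset_univ _)
          (fun k _ _ => (hκpos k).le)
      have h3 : C * ε * ∑ k ∈ Finset.univ.filter (fun k => l ∈ Fl k), κ k ≤ C * ε * S :=
        mul_le_mul_of_nonneg_left hσl (mul_nonneg hC.le hεpos.le)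
      have h4 := hκh l
      apply mul_nonpos_iff.mpr
      right
      refine ⟨?_, hD l t⟩
      rw [hCεS] at h3
      linarith
    have hIκ : ∑ l, I l t ≤ ∑ l, κ l * I l t :=
      Finset.sum_le_sum fun l _ => le_mul_of_one_le_left (hIpos l t htmem) (hκ1 l)
    have hfin : β * (∑ l, I l t) * S ≤ β * S * (∑ k, κ k * I k t) := by
      have h9 := mul_le_mul_of_nonneg_left hIκ hβS.le
      nlinarith
    calc ∑ k, κ k * I' k t
        ≤ β * (∑ l, I l t) * S + G t * (∑ k, κ k * I k t) + ∑ k, κ k * P k := by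
          rw [← hexp]; exact hsum1
      _ ≤ β * S * (∑ k, κ k * I k t) + G t * (∑ k, κ k * I k t) := by
          linarith [hPsum, hfin]
      _ = a t * ∑ k, κ k * I k t := by rw [haval t]; ring
  refine ⟨a, haint, hae, ?_⟩
  -- Apply the Grönwall lemma to W = ∑ κ I
  have hW : ∀ t ∈ Set.Icc (0 : ℝ) T,
      HasDerivAt (fun s => ∑ k, κ k * I k s) (∑ k, κ k * I' k t) t := by
    intro t ht
    exact HasDerivAt.fun_sum fun k _ => (hI k t ht).const_mul (κ k)
  have hW'int : IntegrableOn (fun t => ∑ k, κ k * I' k t) (Icc 0 T) :=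
    integrable_finset_sum _ fun k _ => (hI'int k).const_mul (κ k)
  have hWnn : ∀ t ∈ Set.Icc (0 : ℝ) T, 0 ≤ ∑ k, κ k * I k t :=
    fun t ht => Finset.sum_nonneg fun k _ => mul_nonneg (hκpos k).le (hIpos k t ht)
  exact gron hW hW'int hWnn hann haint hae
end
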